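/- Let A be a unital C*-algebra with trivial center (its center equals ℂ·1_A), let k ≥ 2, and let α and β be automorphisms of A with αᵏ = id and βᵏ = id, regarded as actions of ℤ/kℤ on A via n ↦ αⁿ. Then the following are equivalent: (a) the ℤ/kℤ-actions n ↦ αⁿ and n ↦ βⁿ are cocycle conjugate; (b) the ℤ-actions n ↦ αⁿ and n ↦ βⁿ are cocycle conjugate. -/

import Mathlib

noncomputable section

variable {A : Type*} [NormedRing A] [StarRing A] [CStarRing A] [CompleteSpace A]
  [NormedAlgebra ℂ A] [StarModule ℂ A]

/-- The group of ⋆-algebra automorphisms of `A`, with `(α * β) a = α (β a)`. -/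
instance : Group (A ≃⋆ₐ[ℂ] A) where
  mul e₁ e₂ := e₂.trans e₁
  one := StarAlgEquiv.refl ℂ A
  inv := StarAlgEquiv.symm
  mul_assoc _ _ _ := rfl
  one_mul _ := rfl
  mul_one _ := rfl
  inv_mul_cancel e := StarAlgEquiv.ext fun a => e.symm_apply_apply a

/-- `u` is an `α`-cocycle for the induced `ℤ`-action `n ↦ αⁿ`. -/
def IsZCocycle (α : A ≃⋆ₐ[ℂ] A) (u : ℤ → A) : Prop :=
  (∀ n, u n ∈ unitary A) ∧ ∀ m n : ℤ, u (m + n) = u m * (α ^ m) (u n)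

/-- The `ℤ`-actions generated by `α` and `β` are cocycle conjugate. -/
def ZCocycleConjugate (α β : A ≃⋆ₐ[ℂ] A) : Prop :=
  ∃ (u : ℤ → A) (γ : A ≃⋆ₐ[ℂ] A), IsZCocycle α u ∧
    ∀ (n : ℤ) (a : A), u n * (α ^ n) a * star (u n) = γ ((β ^ n) (γ.symm a))

/-- `u` is a cocycle for the `ℤ/kℤ`-action `n ↦ αⁿ` induced by an automorphism `α`
with `αᵏ = id`. -/
def IsZModCocycle (k : ℕ) (α : A ≃⋆ₐ[ℂ] A) (u : ZMod k → A) : Prop :=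
  (∀ g, u g ∈ unitary A) ∧ ∀ g h : ZMod k, u (g + h) = u g * (α ^ (g.val)) (u h)

/-- The `ℤ/kℤ`-actions induced by `α` and `β` (automorphisms of order dividing `k`)
are cocycle conjugate. -/
def ZModCocycleConjugate (k : ℕ) (α β : A ≃⋆ₐ[ℂ] A) : Prop :=
  ∃ (u : ZMod k → A) (γ : A ≃⋆ₐ[ℂ] A), IsZModCocycle k α u ∧
    ∀ (g : ZMod k) (a : A),
      u g * (α ^ (g.val)) a * star (u g) = γ ((β ^ (g.val)) (γ.symm a))

lemma autOneApply (a : A) : (1 : A ≃⋆ₐ[ℂ] A) a = a := rfl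

/-- `αⁿ` for `n : ℤ` only depends on `n` mod `k` when `αᵏ = 1`. -/
lemma zpowEqVal {k : ℕ} [NeZero k] {α : A ≃⋆ₐ[ℂ] A} (hα : α ^ k = 1) (n : ℤ) :
    α ^ n = α ^ ((n : ZMod k).val) := by
  have hz : α ^ (k : ℤ) = 1 := by rw [zpow_natCast, hα]
  have hdvd : (k : ℤ) ∣ n - (((n : ZMod k).val : ℤ)) := by
    rw [← ZMod.intCast_zmod_eq_zero_iff_dvd]
    push_cast
    rw [ZMod.natCast_val, ZMod.cast_id, sub_self]
  obtain ⟨t, ht⟩ := hdvd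
  have hn : n = (((n : ZMod k).val : ℤ)) + (k : ℤ) * t := by linarith
  conv_lhs => rw [hn]
  rw [zpow_add, zpow_mul, hz, one_zpow, mul_one, zpow_natCast]

lemma smul_one_injective {c d : ℂ} (h : c • (1 : A) = d • (1 : A))
    (hA : (1 : A) ≠ 0) : c = d := by
  have h0 : (c - d) • (1 : A) = 0 := by rw [sub_smul, h, sub_self]
  have h2 : ‖c - d‖ * ‖(1 : A)‖ = 0 := by rw [← norm_smul, h0, norm_zero]
  have h1 : ‖(1 : A)‖ ≠ 0 := by simpa using hA
  have h3 : c = d := by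
    have := (mul_eq_zero.mp h2).resolve_right h1
    simpa [sub_eq_zero] using this
  exact h3

theorem stmt1 (k : ℕ) (hk : 2 ≤ k)
    (hcenter : ∀ a : A, (∀ b : A, a * b = b * a) → ∃ c : ℂ, a = c • (1 : A))
    (α β : A ≃⋆ₐ[ℂ] A) (hα : α ^ k = 1) (hβ : β ^ k = 1) :
    ZModCocycleConjugate k α β ↔ ZCocycleConjugate α β := by
  have : NeZero k := ⟨by omega⟩
  rcases subsingleton_or_nontrivial A with hA | hA
  · constructor <;> intro _
    · exact ⟨fun _ => 1, 1, ⟨fun n => by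
        rw [Unitary.mem_iff]; exact ⟨Subsingleton.elim _ _, Subsingleton.elim _ _⟩,
        fun _ _ => Subsingleton.elim _ _⟩, fun _ _ => Subsingleton.elim _ _⟩
    · exact ⟨fun _ => 1, 1, ⟨fun n => by
        rw [Unitary.mem_iff]; exact ⟨Subsingleton.elim _ _, Subsingleton.elim _ _⟩,
        fun _ _ => Subsingleton.elim _ _⟩, fun _ _ => Subsingleton.elim _ _⟩
  constructor
  · -- ZMod cocycle conjugacy → Z cocycle conjugacy
    rintro ⟨v, γ, ⟨hvu, hvc⟩, hconj⟩
    refine ⟨fun n => v (n : ZMod k), γ, ⟨fun n => hvu _, fun m n => ?_⟩, fun n a => ?_⟩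
    · show v ((m + n : ℤ) : ZMod k) = v (m : ZMod k) * (α ^ m) (v (n : ZMod k))
      rw [zpowEqVal hα m,
        show ((m + n : ℤ) : ZMod k) = (m : ZMod k) + (n : ZMod k) by push_cast; ring]
      exact hvc _ _
    · show v ((n : ℤ) : ZMod k) * (α ^ n) a * star (v ((n : ℤ) : ZMod k)) = _
      rw [zpowEqVal hα n, zpowEqVal hβ n]
      exact hconj (n : ZMod k) a
  · -- Z cocycle conjugacy → ZMod cocycle conjugacy
    rintro ⟨u, γ, ⟨huu, huc⟩, hconj⟩
    have hzα : α ^ (k : ℤ) = 1 := by rw [zpow_natCast, hα]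
    have hzβ : β ^ (k : ℤ) = 1 := by rw [zpow_natCast, hβ]
    have hone : (1 : A) ≠ 0 := one_ne_zero
    -- u k is central
    have hadk : ∀ a : A, u (k : ℤ) * a * star (u (k : ℤ)) = a := by
      intro a
      have := hconj (k : ℤ) a
      rw [hzα, hzβ] at this
      simpa [autOneApply] using this
    have hukmem := huu (k : ℤ)
    rw [Unitary.mem_iff] at hukmem
    have hcentral : ∀ b : A, u (k : ℤ) * b = b * u (k : ℤ) := by
      intro b
      have := congrArg (· * u (k : ℤ)) (hadk b)
      beta_reduce at this
      calc u (k : ℤ) * b = u (k : ℤ) * b * (star (u (k : ℤ)) * u (k : ℤ)) := by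
            rw [hukmem.1, mul_one]
        _ = u (k : ℤ) * b * star (u (k : ℤ)) * u (k : ℤ) := by rw [← mul_assoc]
        _ = b * u (k : ℤ) := by rw [hadk b]
    obtain ⟨c, hc⟩ := hcenter (u (k : ℤ)) hcentral
    -- c is a unimodular scalar
    have hcc : (starRingEnd ℂ) c * c = 1 := by
      have h1 : star (u (k : ℤ)) * u (k : ℤ) = 1 := hukmem.1
      rw [hc, star_smul, star_one, smul_mul_smul] at h1
      rw [mul_one] at h1
      have := smul_one_injective (A := A) (d := 1) (by simpa using h1) hone
      simpa using this
    have hc0 : c ≠ 0 := by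
      intro h; rw [h, mul_zero] at hcc; exact one_ne_zero hcc.symm
    have habsc : ‖c‖ = 1 := by
      have h1 : Complex.normSq c = 1 := by
        have h2 : ((Complex.normSq c : ℂ)) = 1 := by
          rw [Complex.normSq_eq_conj_mul_self]; exact hcc
        exact_mod_cast h2
      rw [Complex.norm_def, h1, Real.sqrt_one]
    -- choose a k-th root of c
    obtain ⟨l, hl⟩ := IsAlgClosed.exists_pow_nat_eq c (show 0 < k by omega)
    have hl0 : l ≠ 0 := by
      intro h; rw [h, zero_pow (by omega : k ≠ 0)] at hl; exact hc0 hl.symm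
    have habsl : ‖l‖ = 1 := by
      have h1 : ‖l‖ ^ k = 1 := by rw [← norm_pow, hl, habsc]
      rcases lt_trichotomy ‖l‖ 1 with h2 | h2 | h2
      · nlinarith [pow_lt_one₀ (norm_nonneg l) h2 (by omega : k ≠ 0)]
      · exact h2
      · nlinarith [one_lt_pow₀ h2 (by omega : k ≠ 0)]
    have hμ : ∀ n : ℤ, (starRingEnd ℂ) (l ^ (-n)) * l ^ (-n) = 1 := by
      intro n
      rw [← Complex.normSq_eq_conj_mul_self]
      have : Complex.normSq (l ^ (-n)) = ‖l ^ (-n)‖ ^ 2 :=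
        Complex.normSq_eq_norm_sq _
      rw [this, norm_zpow, habsl, one_zpow, one_pow, Complex.ofReal_one]
    -- the rescaled cocycle
    set w : ℤ → A := fun n => (l ^ (-n) : ℂ) • u n with hw
    have hwu : ∀ n, w n ∈ unitary A := by
      intro n
      rw [Unitary.mem_iff]
      have h1 := huu n
      rw [Unitary.mem_iff] at h1
      constructor
      · rw [hw]
        simp only [star_smul, star_one, smul_mul_smul, h1.1]
        rw [Complex.star_def, hμ n, one_smul]
      · rw [hw]
        simp only [star_smul, star_one, smul_mul_smul, h1.2]
        rw [Complex.star_def, mul_comm, hμ n, one_smul]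
    have hwcoc : ∀ m n : ℤ, w (m + n) = w m * (α ^ m) (w n) := by
      intro m n
      rw [hw]
      simp only []
      rw [huc m n, map_smul, smul_mul_smul]
      rw [neg_add, zpow_add₀ hl0]
    -- periodicity of w
    have hper : ∀ n : ℤ, w (n + k) = w n := by
      intro n
      rw [hw]
      simp only []
      have hscal : l ^ (-(n + (k : ℤ))) * c = l ^ (-n) := by
        have hkc : l ^ (-(k : ℤ)) * c = 1 := by
          rw [zpow_neg, zpow_natCast, hl, inv_mul_cancel₀ hc0]
        rw [neg_add, zpow_add₀ hl0, mul_assoc, hkc, mul_one]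
      rw [huc n (k : ℤ), hc, map_smul, map_one, mul_smul_comm, mul_one, smul_smul, hscal]
    -- w has the same Ad as u
    have hadw : ∀ (n : ℤ) (a : A),
        w n * (α ^ n) a * star (w n) = u n * (α ^ n) a * star (u n) := by
      intro n a
      have hμ' : l ^ (-n) * star (l ^ (-n)) = 1 := by
        rw [Complex.star_def, mul_comm]; exact hμ n
      rw [hw]
      simp only [star_smul]
      rw [smul_mul_assoc, smul_mul_assoc, mul_smul_comm, smul_smul, hμ', one_smul]
    refine ⟨fun g => w (g.val : ℤ), γ, ⟨fun g => hwu _, fun g h => ?_⟩, fun g a => ?_⟩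
    · show w (((g + h).val : ℤ)) = w (g.val : ℤ) * (α ^ g.val) (w (h.val : ℤ))
      have h1 : w ((g.val : ℤ) + (h.val : ℤ))
          = w (g.val : ℤ) * (α ^ (g.val : ℤ)) (w (h.val : ℤ)) := hwcoc _ _
      simp only [zpow_natCast] at h1
      rw [← h1]
      have hval : (g + h).val = (g.val + h.val) % k := ZMod.val_add g h
      by_cases hlt : g.val + h.val < k
      · rw [hval, Nat.mod_eq_of_lt hlt]
        push_cast
        ring_nf
      · have hge : k ≤ g.val + h.val := not_lt.mp hlt
        have hlt2 : g.val + h.val - k < k := by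
          have := ZMod.val_lt g
          have := ZMod.val_lt h
          omega
        rw [hval, Nat.mod_eq_sub_mod hge, Nat.mod_eq_of_lt hlt2]
        have hcast : ((g.val : ℤ) + (h.val : ℤ)) = ((g.val + h.val - k : ℕ) : ℤ) + (k : ℤ) := by
          push_cast [Nat.cast_sub hge]
          ring
        rw [hcast, hper]
    · show w ((g.val : ℤ)) * (α ^ g.val) a * star (w ((g.val : ℤ))) = _
      have h1 := hconj (g.val : ℤ) a
      have h2 := hadw (g.val : ℤ) a
      simp only [zpow_natCast] at h1 h2
      rw [h2, h1]
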